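/- Suppose the stable rank sr(R) of R satisfies sr(R) < n, and let σ ∈ GL_n(R). Then there exists ρ ∈ E*_n(R) such that the row vector ((σ^ρ)_{11}, …, (σ^ρ)_{1,sr(R)}) of the first sr(R) entries of the first row of σ^ρ = ρ^{-1}σρ is unimodular. -/

import Mathlib

open Matrix

/-- The ring of n×n matrices over R. -/
abbrev Mat (n : ℕ) (R : Type*) [Ring R] := Matrix (Fin n) (Fin n) R

/-- The elementary transvection t_{ij}(x) = e + x·e^{ij}. -/
def trv {n : ℕ} {R : Type*} [Ring R] (i j : Fin n) (x : R) : Mat n R :=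
  1 + Matrix.single i j x

/-- The elementary subgroup E_n(R) of GL_n(R), generated by the elementary
transvections t_{ij}(x) with i ≠ j. -/
def En (n : ℕ) (R : Type*) [Ring R] : Subgroup (Mat n R)ˣ :=
  Subgroup.closure
    { u : (Mat n R)ˣ | ∃ i j : Fin n, i ≠ j ∧ ∃ x : R, u.val = trv i j x }

/-- `A` is a product of `m` E_n(R)-conjugates of `σ` and `σ⁻¹`, i.e.
`A = g₁ ⋯ g_m` where each `g_p = ξ_p⁻¹ τ_p ξ_p` with `τ_p ∈ {σ, σ⁻¹}` and `ξ_p ∈ E_n(R)`. -/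
def IsProdConj {n : ℕ} {R : Type*} [Ring R] (m : ℕ) (σ : (Mat n R)ˣ) (A : Mat n R) : Prop :=
  ∃ g : Fin m → (Mat n R)ˣ,
    (∀ p, ∃ ξ ∈ En n R, g p = ξ⁻¹ * σ * ξ ∨ g p = ξ⁻¹ * σ⁻¹ * ξ) ∧
    (List.ofFn g).prod.val = A

/-- A row vector `u` is unimodular if `u v = 1` for some column vector `v`. -/
def Unimodular {m : ℕ} {R : Type*} [Ring R] (u : Fin m → R) : Prop :=
  ∃ v : Fin m → R, ∑ p, u p * v p = 1

/-- The stable range condition at `m`: for any `p ≥ m` and any unimodular row of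
length `p + 1` there are `x_1, …, x_p` such that `(u_1 + u_{p+1}x_1, …, u_p + u_{p+1}x_p)`
is unimodular. -/
def StableRange (R : Type*) [Ring R] (m : ℕ) : Prop :=
  ∀ p : ℕ, m ≤ p → ∀ u : Fin (p + 1) → R, Unimodular u →
    ∃ x : Fin p → R, Unimodular fun q : Fin p => u q.castSucc + u (Fin.last p) * x q

/-- `sr(R) = m`: `m` is the least positive integer satisfying the stable range condition. -/
def HasStableRank (R : Type*) [Ring R] (m : ℕ) : Prop :=
  IsLeast {k : ℕ | 1 ≤ k ∧ StableRange R k} m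

/-- The subgroup E*_n(R) of GL_n(R) generated by the transvections t_{kl}(x)
with k ≠ l, k ≠ 1 and l ≠ n. -/
def Estar (n : ℕ) (R : Type*) [Ring R] : Subgroup (Mat n R)ˣ :=
  Subgroup.closure
    { u : (Mat n R)ˣ | ∃ k l : Fin n, k ≠ l ∧ k.val ≠ 0 ∧ l.val ≠ n - 1 ∧
        ∃ x : R, u.val = trv k l x }

section Aux
variable {R : Type*} [Ring R] {n : ℕ}

lemma unimod_congr {a b : ℕ} (e : a = b) (w : Fin b → R) (u : Fin a → R)
    (h : ∀ q : Fin a, u q = w (Fin.cast e q)) (hw : Unimodular w) : Unimodular u := by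
  obtain ⟨v, hv⟩ := hw
  refine ⟨fun q => v (Fin.cast e q), ?_⟩
  rw [Fintype.sum_equiv (finCongr e) _ (fun q => w q * v q) (fun q => by rw [h q]; rfl)]
  exact hv

lemma trv_mul_trv {i j : Fin n} (hij : i ≠ j) (x y : R) :
    trv i j x * trv i j y = trv i j (x + y) := by
  unfold trv
  rw [add_mul, one_mul, mul_add, mul_one,
    Matrix.single_mul_single_of_ne (h := Ne.symm hij), single_add, add_zero]
  abel

def trvUnit (i j : Fin n) (hij : i ≠ j) (x : R) : (Mat n R)ˣ :=
  ⟨trv i j x, trv i j (-x),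
    by rw [trv_mul_trv hij, add_neg_cancel]; simp [trv],
    by rw [trv_mul_trv hij, neg_add_cancel]; simp [trv]⟩

lemma exists_estar_sum (x : Fin n → R) (pin : Fin n) (hp0 : pin.val ≠ 0) :
    ∀ S : Finset (Fin n), pin ∉ S → (∀ l ∈ S, l.val ≠ n - 1) →
    ∃ τ ∈ Estar n R, τ.val = 1 + ∑ l ∈ S, Matrix.single pin l (x l) := by
  intro S
  induction S using Finset.induction_on with
  | empty => intro _ _; exact ⟨1, one_mem _, by simp⟩
  | @insert a S ha ih =>
    intro hpin hSn
    have hpa : pin ≠ a := fun h => hpin (h ▸ Finset.mem_insert_self a S)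
    obtain ⟨τ, hτE, hτval⟩ := ih (fun h => hpin (Finset.mem_insert_of_mem h))
      (fun l hl => hSn l (Finset.mem_insert_of_mem hl))
    refine ⟨trvUnit pin a hpa (x a) * τ, ?_, ?_⟩
    · exact mul_mem (Subgroup.subset_closure
        ⟨pin, a, hpa, hp0, hSn a (Finset.mem_insert_self a S), x a, rfl⟩) hτE
    · rw [Units.val_mul, hτval]
      show trv pin a (x a) * _ = _
      unfold trv
      rw [Finset.sum_insert ha, add_mul, one_mul, mul_add, mul_one, Finset.mul_sum]
      rw [Finset.sum_eq_zero (fun l _ =>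
        Matrix.single_mul_single_of_ne _ _ _ _ (Ne.symm hpa) (x l)), add_zero]
      abel

lemma row_mul (i0 : Fin n) {a : Mat n R} (b : Mat n R)
    (ha : ∀ j, a i0 j = (1 : Mat n R) i0 j) (j : Fin n) :
    (a * b) i0 j = b i0 j := by
  rw [Matrix.mul_apply]
  calc ∑ k, a i0 k * b k j = ∑ k, (1 : Mat n R) i0 k * b k j :=
        Finset.sum_congr rfl fun k _ => by rw [ha k]
    _ = b i0 j := by rw [← Matrix.mul_apply, Matrix.one_mul]

def rowFixed (i0 : Fin n) : Subgroup (Mat n R)ˣ where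
  carrier := { u | ∀ j, u.val i0 j = (1 : Mat n R) i0 j }
  one_mem' := fun _ => rfl
  mul_mem' := fun {a b} ha hb j => by
    rw [Units.val_mul, row_mul i0 _ ha j]; exact hb j
  inv_mem' := fun {a} ha j => by
    have h1 : (a.val * (a⁻¹).val) i0 j = (1 : Mat n R) i0 j := by
      rw [← Units.val_mul, mul_inv_cancel, Units.val_one]
    rwa [row_mul i0 _ ha j] at h1

lemma estar_le_rowFixed (hn : 0 < n) :
    Estar n R ≤ rowFixed (⟨0, hn⟩ : Fin n) := by
  rw [Estar, Subgroup.closure_le]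
  rintro u ⟨k, l, hkl, hk0, hln, x, hval⟩ j
  rw [hval]
  show (1 + Matrix.single k l x) (⟨0, hn⟩ : Fin n) j = _
  rw [Matrix.add_apply, Matrix.single_apply_of_row_ne
    (fun h => hk0 (by rw [h])) _ _ _, add_zero]

lemma mul_one_add_sum_apply (M : Mat n R) (pin : Fin n) (S : Finset (Fin n)) (x' : Fin n → R)
    (i c : Fin n) (hc : c ∈ S) :
    (M * (1 + ∑ l ∈ S, Matrix.single pin l (x' l))) i c
      = M i c + M i pin * x' c := by
  rw [mul_add, mul_one, Matrix.add_apply]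
  congr 1
  rw [Finset.mul_sum, Matrix.sum_apply]
  rw [Finset.sum_eq_single c
    (fun l _ hlc => Matrix.mul_single_apply_of_ne _ _ _ _ _ (Ne.symm hlc) M)
    (fun h => absurd hc h)]
  exact Matrix.mul_single_apply_same _ _ _ _ M

lemma lemC {R : Type*} [Ring R] {n m : ℕ} (hn : 0 < n) (hm1 : 1 ≤ m)
    (hsr : StableRange R m) (σ : (Mat n R)ˣ) :
    ∀ k : ℕ, m + k ≤ n → ∃ ρ ∈ Estar n R,
      Unimodular fun q : Fin (n - k) =>
        (σ * ρ).val ⟨0, hn⟩ ⟨q.val, by have := q.isLt; omega⟩ := by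
  intro k
  induction k with
  | zero =>
    intro _
    refine ⟨1, one_mem _, fun q => (σ⁻¹).val ⟨q.val, by have := q.isLt; omega⟩ ⟨0, hn⟩, ?_⟩
    have h1 : (σ.val * (σ⁻¹).val) (⟨0, hn⟩ : Fin n) ⟨0, hn⟩ = 1 := by
      rw [← Units.val_mul, mul_inv_cancel, Units.val_one]
      exact Matrix.one_apply_eq _
    rw [Matrix.mul_apply] at h1
    rw [← h1]
    refine Fintype.sum_equiv (finCongr (Nat.sub_zero n)) _ _ (fun q => ?_)
    rw [mul_one]
    rfl
  | succ k ih =>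
    intro hkn
    obtain ⟨ρ, hρE, hρU⟩ := ih (by omega)
    set p := n - (k + 1) with hp
    have hpm : m ≤ p := by omega
    have hpn : p < n := by omega
    have hpk : n - k = p + 1 := by omega
    set u : Fin (p + 1) → R :=
      fun q => (σ * ρ).val ⟨0, hn⟩ ⟨q.val, by have := q.isLt; omega⟩ with hu
    have huU : Unimodular u := unimod_congr hpk.symm _ u (fun q => rfl) hρU
    obtain ⟨x, hx⟩ := hsr p hpm u huU
    set pin : Fin n := ⟨p, hpn⟩ with hpin
    set x' : Fin n → R := fun l => if h : l.val < p then x ⟨l.val, h⟩ else 0 with hx'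
    set S : Finset (Fin n) := Finset.univ.filter (fun l : Fin n => l.val < p) with hS
    obtain ⟨τ, hτE, hτval⟩ := exists_estar_sum x' pin (by simp only [hpin]; omega) S
      (by simp only [hS, hpin, Finset.mem_filter, Finset.mem_univ, true_and]; omega)
      (by intro l hl
          rw [hS] at hl
          simp only [Finset.mem_filter, Finset.mem_univ, true_and] at hl
          omega)
    refine ⟨ρ * τ, mul_mem hρE hτE, ?_⟩
    refine unimod_congr (by omega : n - (k+1) = p) _ _ (fun q => ?_) hx
    have hq : (q : ℕ) < p := q.isLt
    have hcS : (⟨q.val, by omega⟩ : Fin n) ∈ S := by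
      rw [hS]; simp only [Finset.mem_filter, Finset.mem_univ, true_and]; exact hq
    have key : (σ * (ρ * τ)).val ⟨0, hn⟩ ⟨q.val, by omega⟩
        = u (Fin.castSucc ⟨q.val, hq⟩) + u (Fin.last p) * x ⟨q.val, hq⟩ := by
      rw [← mul_assoc, Units.val_mul, hτval,
        mul_one_add_sum_apply _ pin S x' _ _ hcS]
      have h1 : x' (⟨q.val, by omega⟩ : Fin n) = x ⟨q.val, hq⟩ := dif_pos hq
      rw [h1]
      rfl
    rw [key]
    rfl

end Aux

theorem stmt11 {R : Type*} [Ring R] [Nontrivial R] {n : ℕ} (hn : 3 ≤ n)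
    (m : ℕ) (hsr : HasStableRank R m) (hmn : m < n) (σ : (Mat n R)ˣ) :
    ∃ ρ ∈ Estar n R, Unimodular fun q : Fin m =>
      (ρ⁻¹ * σ * ρ).val ⟨0, by omega⟩
        ⟨q.val, by have := q.isLt; omega⟩ := by
  have hn0 : 0 < n := by omega
  obtain ⟨hm1, hSR⟩ := hsr.1
  obtain ⟨ρ, hρE, hρU⟩ := lemC hn0 hm1 hSR σ (n - m) (by omega)
  refine ⟨ρ, hρE, ?_⟩
  refine unimod_congr (by omega : m = n - (n - m)) _ _ (fun q => ?_) hρU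
  have hrow : ∀ j, (ρ⁻¹).val (⟨0, hn0⟩ : Fin n) j = (1 : Mat n R) (⟨0, hn0⟩ : Fin n) j :=
    (rowFixed _).inv_mem' (estar_le_rowFixed hn0 hρE)
  show (ρ⁻¹ * σ * ρ).val ⟨0, hn0⟩ ⟨q.val, _⟩ = (σ * ρ).val ⟨0, hn0⟩ ⟨q.val, _⟩
  rw [mul_assoc, Units.val_mul, row_mul _ _ hrow]
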